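/- For every θ ∈ [0, π]: if r ∈ ℛ⁻ with r > 0, then (4cos²θ)^r ≤ 2^{2r}·a₀⁺ + Σ_{j=1}^{4} 2^{2(r−j)}·a_j⁺·(2cos θ)^{2j}; and if r ∈ ℛ⁺, then (4cos²θ)^r ≥ 2^{2r}·a₀⁺ + Σ_{j=1}^{4} 2^{2(r−j)}·a_j⁺·(2cos θ)^{2j}. -/

import Mathlib

noncomputable section

open Real Filter

def P1p (r κ η : ℝ) : ℝ :=
  r * κ ^ (r - 1) * η * (κ - 1) * (η - κ) * (κ * η + 2 * κ + η) * (η - 1) ^ 2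
    + 2 * (κ ^ r - 1) * κ * η * (η - 1) ^ 2 * (2 * κ * η + 4 * κ - η ^ 2 - 2 * η - 3)

def P2p (r κ η : ℝ) : ℝ :=
  r * κ ^ (r - 1) * (κ - 1) * (κ - η) * (η - 1) ^ 2 * (2 * κ * η + κ + η ^ 2 + 2 * η)
    + (η ^ r - 1) * (κ - 1) ^ 2 *
      (8 * κ * η ^ 2 + 4 * η ^ 2 - η * κ ^ 2 - 2 * κ * η - 3 * η - κ ^ 3 - 2 * κ ^ 2 - 3 * κ)

def P3p (r κ η : ℝ) : ℝ :=
  r * κ ^ (r - 1) * (κ - 1) * (κ + 2 * η + 1) * (η - κ) * (η - 1) ^ 2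
    + 2 * (κ ^ r - 1) * (2 * κ ^ 2 + 2 * κ * η - η ^ 2 - 2 * η - 1) * (η - 1) ^ 2

def P4p (r κ η : ℝ) : ℝ :=
  r * κ ^ (r - 1) * (κ - 1) * (κ - η) * (η - 1) ^ 2
    + (η ^ r - 1) * (κ - 1) ^ 2 * (3 * η - κ - 2)

/-- `κ₊ = (6 − √21)/20`. -/
def κp : ℝ := (6 - Real.sqrt 21) / 20

/-- `η₊ = (6 + √21)/20`. -/
def ηp : ℝ := (6 + Real.sqrt 21) / 20

def a1p (r : ℝ) : ℝ :=
  (P1p r κp ηp - P1p r ηp κp) / ((κp - 1) ^ 2 * (ηp - 1) ^ 2 * (κp - ηp) ^ 3)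

def a2p (r : ℝ) : ℝ :=
  (P2p r κp ηp - P2p r ηp κp) / ((κp - 1) ^ 2 * (ηp - 1) ^ 2 * (κp - ηp) ^ 3)

def a3p (r : ℝ) : ℝ :=
  (P3p r κp ηp - P3p r ηp κp) / ((κp - 1) ^ 2 * (ηp - 1) ^ 2 * (κp - ηp) ^ 3)

def a4p (r : ℝ) : ℝ :=
  (P4p r κp ηp - P4p r ηp κp) / ((κp - 1) ^ 2 * (ηp - 1) ^ 2 * (κp - ηp) ^ 3)

/-- `a₀⁺ = 1 − a₁⁺ − a₂⁺ − a₃⁺ − a₄⁺`. -/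
def a0p (r : ℝ) : ℝ := 1 - a1p r - a2p r - a3p r - a4p r

/-- `ℛ⁻ = (0,1] ∪ [2,3] ∪ [4,∞)`. -/
def Rminus : Set ℝ := Set.Ioc 0 1 ∪ Set.Icc 2 3 ∪ Set.Ici 4

/-- `ℛ⁺ = [1,2] ∪ [3,4]`. -/
def Rplus : Set ℝ := Set.Icc 1 2 ∪ Set.Icc 3 4


/-! Auxiliary: derivative of `a * x ^ p + poly` for `x ≠ 0`. -/
lemma hasDerivAt_aux (a p c0 c1 c2 c3 c4 c5 t : ℝ) (ht : t ≠ 0) :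
    HasDerivAt
      (fun x : ℝ => a * x ^ p + (c0 + c1*x + c2*x^2 + c3*x^3 + c4*x^4 + c5*x^5))
      (a * p * t ^ (p-1) + (c1 + 2*c2*t + 3*c3*t^2 + 4*c4*t^3 + 5*c5*t^4)) t := by
  have h1 : HasDerivAt (fun x : ℝ => x ^ p) (p * t ^ (p-1)) t :=
    Real.hasDerivAt_rpow_const (Or.inl ht)
  have h2 : HasDerivAt (fun x : ℝ => a * x ^ p) (a * (p * t ^ (p-1))) t := h1.const_mul a
  have h3 : HasDerivAt
      (fun x : ℝ => c0 + c1*x + c2*x^2 + c3*x^3 + c4*x^4 + c5*x^5)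
      (c1 + 2*c2*t + 3*c3*t^2 + 4*c4*t^3 + 5*c5*t^4) t := by
    have hid : HasDerivAt (fun x : ℝ => x) 1 t := hasDerivAt_id' t
    have h := (((((hasDerivAt_const t c0).add (hid.const_mul c1)).add
        ((hasDerivAt_pow 2 t).const_mul c2)).add ((hasDerivAt_pow 3 t).const_mul c3)).add
        ((hasDerivAt_pow 4 t).const_mul c4)).add ((hasDerivAt_pow 5 t).const_mul c5)
    refine HasDerivAt.congr_deriv h ?_
    push_cast
    ring
  have := h2.add h3
  refine HasDerivAt.congr_deriv this ?_
  ring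

/-- Rolle step with continuity hypothesis on `[0,1]` (allows left endpoint `0`). -/
lemma stepA {f g : ℝ → ℝ} (hcont : ContinuousOn f (Set.Icc 0 1))
    (hd : ∀ t : ℝ, 0 < t → HasDerivAt f (g t) t)
    {a b : ℝ} (ha : 0 ≤ a) (hab : a < b) (hb : b ≤ 1) (fa : f a = 0) (fb : f b = 0) :
    ∃ c, a < c ∧ c < b ∧ g c = 0 := by
  obtain ⟨c, hc1, hc2⟩ := exists_hasDerivAt_eq_zero hab
    (hcont.mono (Set.Icc_subset_Icc ha hb)) (by rw [fa, fb])
    (fun x hx => hd x (lt_of_le_of_lt ha hx.1))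
  exact ⟨c, hc1.1, hc1.2, hc2⟩

/-- Rolle step away from `0`. -/
lemma stepB {f g : ℝ → ℝ} (hd : ∀ t : ℝ, 0 < t → HasDerivAt f (g t) t)
    {a b : ℝ} (ha : 0 < a) (hab : a < b) (fa : f a = 0) (fb : f b = 0) :
    ∃ c, a < c ∧ c < b ∧ g c = 0 := by
  have hc : ContinuousOn f (Set.Icc a b) := fun t ht =>
    ((hd t (lt_of_lt_of_le ha ht.1)).continuousAt).continuousWithinAt
  obtain ⟨c, hc1, hc2⟩ := exists_hasDerivAt_eq_zero hab hc (by rw [fa, fb])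
    (fun x hx => hd x (ha.trans hx.1))
  exact ⟨c, hc1.1, hc1.2, hc2⟩

lemma chain4 {f1 f2 f3 f4 f5 : ℝ → ℝ}
    (h1 : ∀ t : ℝ, 0 < t → HasDerivAt f1 (f2 t) t)
    (h2 : ∀ t : ℝ, 0 < t → HasDerivAt f2 (f3 t) t)
    (h3 : ∀ t : ℝ, 0 < t → HasDerivAt f3 (f4 t) t)
    (h4 : ∀ t : ℝ, 0 < t → HasDerivAt f4 (f5 t) t)
    {y1 y2 y3 y4 y5 : ℝ} (hy1 : 0 < y1) (h12 : y1 < y2) (h23 : y2 < y3)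
    (h34 : y3 < y4) (h45 : y4 < y5)
    (z1 : f1 y1 = 0) (z2 : f1 y2 = 0) (z3 : f1 y3 = 0) (z4 : f1 y4 = 0) (z5 : f1 y5 = 0) :
    ∃ ξ, 0 < ξ ∧ f5 ξ = 0 := by
  obtain ⟨x1, hx1a, hx1b, hx1⟩ := stepB h1 hy1 h12 z1 z2
  obtain ⟨x2, hx2a, hx2b, hx2⟩ := stepB h1 (hy1.trans h12) h23 z2 z3
  obtain ⟨x3, hx3a, hx3b, hx3⟩ := stepB h1 ((hy1.trans h12).trans h23) h34 z3 z4
  obtain ⟨x4, hx4a, hx4b, hx4⟩ := stepB h1 (((hy1.trans h12).trans h23).trans h34) h45 z4 z5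
  have hx1p : 0 < x1 := hy1.trans hx1a
  obtain ⟨w1, hw1a, hw1b, hw1⟩ := stepB h2 hx1p (hx1b.trans hx2a) hx1 hx2
  obtain ⟨w2, hw2a, hw2b, hw2⟩ := stepB h2 (hx1p.trans (hx1b.trans hx2a)) (hx2b.trans hx3a) hx2 hx3
  obtain ⟨w3, hw3a, hw3b, hw3⟩ :=
    stepB h2 ((hx1p.trans (hx1b.trans hx2a)).trans (hx2b.trans hx3a)) (hx3b.trans hx4a) hx3 hx4
  have hw1p : 0 < w1 := hx1p.trans hw1a
  obtain ⟨v1, hv1a, hv1b, hv1⟩ := stepB h3 hw1p (hw1b.trans hw2a) hw1 hw2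
  obtain ⟨v2, hv2a, hv2b, hv2⟩ := stepB h3 (hw1p.trans (hw1b.trans hw2a)) (hw2b.trans hw3a) hw2 hw3
  have hv1p : 0 < v1 := hw1p.trans hv1a
  obtain ⟨ξ, hξa, hξb, hξ⟩ := stepB h4 hv1p (hv1b.trans hv2a) hv1 hv2
  exact ⟨ξ, hv1p.trans hξa, hξ⟩

lemma rolle5 (f0 f1 f2 f3 f4 f5 : ℝ → ℝ)
    (hcont : ContinuousOn f0 (Set.Icc 0 1))
    (h0 : ∀ t : ℝ, 0 < t → HasDerivAt f0 (f1 t) t)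
    (h1 : ∀ t : ℝ, 0 < t → HasDerivAt f1 (f2 t) t)
    (h2 : ∀ t : ℝ, 0 < t → HasDerivAt f2 (f3 t) t)
    (h3 : ∀ t : ℝ, 0 < t → HasDerivAt f3 (f4 t) t)
    (h4 : ∀ t : ℝ, 0 < t → HasDerivAt f4 (f5 t) t)
    (κ η u : ℝ) (hκ0 : 0 < κ) (hκη : κ < η) (hη1 : η < 1)
    (hu0 : 0 ≤ u) (hu1 : u < 1) (huκ : u ≠ κ) (huη : u ≠ η)
    (zκ : f0 κ = 0) (zη : f0 η = 0) (z1 : f0 1 = 0) (zu : f0 u = 0)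
    (z1κ : f1 κ = 0) (z1η : f1 η = 0) :
    ∃ ξ, 0 < ξ ∧ f5 ξ = 0 := by
  have hκ1 : κ < 1 := hκη.trans hη1
  rcases lt_or_gt_of_ne huκ with h | h
  · obtain ⟨w1, hw1a, hw1b, hw1⟩ := stepA hcont h0 hu0 h hκ1.le zu zκ
    obtain ⟨w2, hw2a, hw2b, hw2⟩ := stepA hcont h0 (hu0.trans h.le) hκη hη1.le zκ zη
    obtain ⟨w3, hw3a, hw3b, hw3⟩ := stepA hcont h0 (hu0.trans (h.trans hκη).le) hη1 le_rfl zη z1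
    exact chain4 h1 h2 h3 h4 (lt_of_le_of_lt hu0 hw1a) hw1b hw2a hw2b hw3a hw1 z1κ hw2 z1η hw3
  · rcases lt_or_gt_of_ne huη with h' | h'
    · obtain ⟨w1, hw1a, hw1b, hw1⟩ := stepA hcont h0 hκ0.le h (hu1.le) zκ zu
      obtain ⟨w2, hw2a, hw2b, hw2⟩ := stepA hcont h0 (hκ0.le.trans h.le) h' hη1.le zu zη
      obtain ⟨w3, hw3a, hw3b, hw3⟩ := stepA hcont h0 (hκ0.trans hκη).le hη1 le_rfl zη z1
      exact chain4 h1 h2 h3 h4 hκ0 hw1a (hw1b.trans hw2a) hw2b hw3a z1κ hw1 hw2 z1η hw3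
    · obtain ⟨w1, hw1a, hw1b, hw1⟩ := stepA hcont h0 hκ0.le hκη (hη1.le) zκ zη
      obtain ⟨w2, hw2a, hw2b, hw2⟩ := stepA hcont h0 (hκ0.trans hκη).le h' hu1.le zη zu
      obtain ⟨w3, hw3a, hw3b, hw3⟩ := stepA hcont h0 (hκ0.le.trans (hκη.trans h').le) hu1 le_rfl zu z1
      exact chain4 h1 h2 h3 h4 hκ0 hw1a hw1b hw2a (hw2b.trans hw3a) z1κ hw1 z1η hw2 hw3

lemma quintic_rolle (r c0 c1 c2 c3 c4 c5 κ η u : ℝ) (hr : 0 < r)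
    (hκ0 : 0 < κ) (hκη : κ < η) (hη1 : η < 1)
    (hu0 : 0 ≤ u) (hu1 : u < 1) (huκ : u ≠ κ) (huη : u ≠ η)
    (zκ : 1 * κ ^ r + (c0 + c1*κ + c2*κ^2 + c3*κ^3 + c4*κ^4 + c5*κ^5) = 0)
    (zη : 1 * η ^ r + (c0 + c1*η + c2*η^2 + c3*η^3 + c4*η^4 + c5*η^5) = 0)
    (z1 : 1 * (1:ℝ) ^ r + (c0 + c1*1 + c2*1^2 + c3*1^3 + c4*1^4 + c5*1^5) = 0)
    (zu : 1 * u ^ r + (c0 + c1*u + c2*u^2 + c3*u^3 + c4*u^4 + c5*u^5) = 0)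
    (z1κ : r * κ ^ (r-1) + (c1 + (2*c2)*κ + (3*c3)*κ^2 + (4*c4)*κ^3 + (5*c5)*κ^4 + 0*κ^5) = 0)
    (z1η : r * η ^ (r-1) + (c1 + (2*c2)*η + (3*c3)*η^2 + (4*c4)*η^3 + (5*c5)*η^4 + 0*η^5) = 0) :
    ∃ ξ, 0 < ξ ∧ r*(r-1)*(r-2)*(r-3)*(r-4) * ξ ^ (r-5) + 120*c5 = 0 := by
  have hcont : ContinuousOn
      (fun x : ℝ => 1 * x ^ r + (c0 + c1*x + c2*x^2 + c3*x^3 + c4*x^4 + c5*x^5))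
      (Set.Icc 0 1) := by
    have hx : ContinuousOn (fun x : ℝ => x ^ r) (Set.Icc 0 1) := fun x _ =>
      (Real.continuousAt_rpow_const x r (Or.inr hr.le)).continuousWithinAt
    exact (continuousOn_const.mul hx).add (Continuous.continuousOn (by continuity))
  have h0 : ∀ t : ℝ, 0 < t → HasDerivAt
      (fun x : ℝ => 1 * x ^ r + (c0 + c1*x + c2*x^2 + c3*x^3 + c4*x^4 + c5*x^5))
      ((fun x : ℝ => r * x ^ (r-1) + (c1 + (2*c2)*x + (3*c3)*x^2 + (4*c4)*x^3 + (5*c5)*x^4 + 0*x^5)) t) t := by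
    intro t ht
    have h := hasDerivAt_aux 1 r c0 c1 c2 c3 c4 c5 t ht.ne'
    convert h using 1
    ring
  have h1 : ∀ t : ℝ, 0 < t → HasDerivAt
      (fun x : ℝ => r * x ^ (r-1) + (c1 + (2*c2)*x + (3*c3)*x^2 + (4*c4)*x^3 + (5*c5)*x^4 + 0*x^5))
      ((fun x : ℝ => (r*(r-1)) * x ^ (r-2) + ((2*c2) + (6*c3)*x + (12*c4)*x^2 + (20*c5)*x^3 + 0*x^4 + 0*x^5)) t) t := by
    intro t ht
    have h := hasDerivAt_aux r (r-1) c1 (2*c2) (3*c3) (4*c4) (5*c5) 0 t ht.ne'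
    rw [show r - 1 - 1 = r - 2 by ring] at h
    convert h using 1
    ring
  have h2 : ∀ t : ℝ, 0 < t → HasDerivAt
      (fun x : ℝ => (r*(r-1)) * x ^ (r-2) + ((2*c2) + (6*c3)*x + (12*c4)*x^2 + (20*c5)*x^3 + 0*x^4 + 0*x^5))
      ((fun x : ℝ => (r*(r-1)*(r-2)) * x ^ (r-3) + ((6*c3) + (24*c4)*x + (60*c5)*x^2 + 0*x^3 + 0*x^4 + 0*x^5)) t) t := by
    intro t ht
    have h := hasDerivAt_aux (r*(r-1)) (r-2) (2*c2) (6*c3) (12*c4) (20*c5) 0 0 t ht.ne'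
    rw [show r - 2 - 1 = r - 3 by ring] at h
    convert h using 1
    ring
  have h3 : ∀ t : ℝ, 0 < t → HasDerivAt
      (fun x : ℝ => (r*(r-1)*(r-2)) * x ^ (r-3) + ((6*c3) + (24*c4)*x + (60*c5)*x^2 + 0*x^3 + 0*x^4 + 0*x^5))
      ((fun x : ℝ => (r*(r-1)*(r-2)*(r-3)) * x ^ (r-4) + ((24*c4) + (120*c5)*x + 0*x^2 + 0*x^3 + 0*x^4 + 0*x^5)) t) t := by
    intro t ht
    have h := hasDerivAt_aux (r*(r-1)*(r-2)) (r-3) (6*c3) (24*c4) (60*c5) 0 0 0 t ht.ne'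
    rw [show r - 3 - 1 = r - 4 by ring] at h
    convert h using 1
    ring
  have h4 : ∀ t : ℝ, 0 < t → HasDerivAt
      (fun x : ℝ => (r*(r-1)*(r-2)*(r-3)) * x ^ (r-4) + ((24*c4) + (120*c5)*x + 0*x^2 + 0*x^3 + 0*x^4 + 0*x^5))
      ((fun x : ℝ => (r*(r-1)*(r-2)*(r-3)*(r-4)) * x ^ (r-5) + (120*c5 + 0*x + 0*x^2 + 0*x^3 + 0*x^4 + 0*x^5)) t) t := by
    intro t ht
    have h := hasDerivAt_aux (r*(r-1)*(r-2)*(r-3)) (r-4) (24*c4) (120*c5) 0 0 0 0 t ht.ne'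
    rw [show r - 4 - 1 = r - 5 by ring] at h
    convert h using 1
    ring
  obtain ⟨ξ, hξ0, hξ⟩ := rolle5 _ _ _ _ _ _ hcont h0 h1 h2 h3 h4 κ η u hκ0 hκη hη1
    hu0 hu1 huκ huη zκ zη z1 zu z1κ z1η
  exact ⟨ξ, hξ0, by linear_combination hξ⟩

/-! sign lemmas -/
lemma sign_prod_minus {r : ℝ} (h : ((0:ℝ) < r ∧ r ≤ 1) ∨ (2 ≤ r ∧ r ≤ 3) ∨ 4 ≤ r) :
    0 ≤ r*(r-1)*(r-2)*(r-3)*(r-4) := by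
  rcases h with ⟨h1, h2⟩ | ⟨h1, h2⟩ | h1
  · nlinarith [mul_nonneg (mul_nonneg (mul_nonneg (mul_nonneg h1.le
      (by linarith : (0:ℝ) ≤ 1-r)) (by linarith : (0:ℝ) ≤ 2-r))
      (by linarith : (0:ℝ) ≤ 3-r)) (by linarith : (0:ℝ) ≤ 4-r)]
  · nlinarith [mul_nonneg (mul_nonneg (mul_nonneg (mul_nonneg
      (by linarith : (0:ℝ) ≤ r) (by linarith : (0:ℝ) ≤ r-1)) (by linarith : (0:ℝ) ≤ r-2))
      (by linarith : (0:ℝ) ≤ 3-r)) (by linarith : (0:ℝ) ≤ 4-r)]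
  · nlinarith [mul_nonneg (mul_nonneg (mul_nonneg (mul_nonneg
      (by linarith : (0:ℝ) ≤ r) (by linarith : (0:ℝ) ≤ r-1)) (by linarith : (0:ℝ) ≤ r-2))
      (by linarith : (0:ℝ) ≤ r-3)) (by linarith : (0:ℝ) ≤ r-4)]

lemma sign_prod_plus {r : ℝ} (h : ((1:ℝ) ≤ r ∧ r ≤ 2) ∨ (3 ≤ r ∧ r ≤ 4)) :
    r*(r-1)*(r-2)*(r-3)*(r-4) ≤ 0 := by
  rcases h with ⟨h1, h2⟩ | ⟨h1, h2⟩
  · nlinarith [mul_nonneg (mul_nonneg (mul_nonneg (mul_nonneg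
      (by linarith : (0:ℝ) ≤ r) (by linarith : (0:ℝ) ≤ r-1)) (by linarith : (0:ℝ) ≤ 2-r))
      (by linarith : (0:ℝ) ≤ 3-r)) (by linarith : (0:ℝ) ≤ 4-r)]
  · nlinarith [mul_nonneg (mul_nonneg (mul_nonneg (mul_nonneg
      (by linarith : (0:ℝ) ≤ r) (by linarith : (0:ℝ) ≤ r-1)) (by linarith : (0:ℝ) ≤ r-2))
      (by linarith : (0:ℝ) ≤ r-3)) (by linarith : (0:ℝ) ≤ 4-r)]

def den (κ η : ℝ) : ℝ := (κ - 1) ^ 2 * (η - 1) ^ 2 * (κ - η) ^ 3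
def A1 (r κ η : ℝ) : ℝ := (P1p r κ η - P1p r η κ) / den κ η
def A2 (r κ η : ℝ) : ℝ := (P2p r κ η - P2p r η κ) / den κ η
def A3 (r κ η : ℝ) : ℝ := (P3p r κ η - P3p r η κ) / den κ η
def A4 (r κ η : ℝ) : ℝ := (P4p r κ η - P4p r η κ) / den κ η
def A0 (r κ η : ℝ) : ℝ := 1 - A1 r κ η - A2 r κ η - A3 r κ η - A4 r κ η

lemma a1p_eq (r : ℝ) : a1p r = A1 r κp ηp := rfl
lemma a2p_eq (r : ℝ) : a2p r = A2 r κp ηp := rfl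
lemma a3p_eq (r : ℝ) : a3p r = A3 r κp ηp := rfl
lemma a4p_eq (r : ℝ) : a4p r = A4 r κp ηp := rfl
lemma a0p_eq (r : ℝ) : a0p r = A0 r κp ηp := rfl

lemma sqrt21_lt : Real.sqrt 21 < 5 := by
  nlinarith [Real.sq_sqrt (by norm_num : (0:ℝ) ≤ 21), Real.sqrt_nonneg 21]

lemma sqrt21_pos : 0 < Real.sqrt 21 := Real.sqrt_pos.2 (by norm_num)

lemma κp_pos : 0 < κp := by unfold κp; nlinarith [sqrt21_lt]
lemma κp_lt_ηp : κp < ηp := by unfold κp ηp; nlinarith [sqrt21_pos]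
lemma ηp_lt_one : ηp < 1 := by unfold ηp; nlinarith [sqrt21_lt]
lemma κp_lt_one : κp < 1 := κp_lt_ηp.trans ηp_lt_one

section interp
variable (r κ η : ℝ)

lemma interp_sum : A0 r κ η + A1 r κ η + A2 r κ η + A3 r κ η + A4 r κ η = 1 := by
  unfold A0; ring

variable (h1 : κ ≠ 1) (h2 : η ≠ 1) (h3 : κ ≠ η)
include h1 h2 h3

lemma interp_val_κ :
    A0 r κ η + A1 r κ η * κ + A2 r κ η * κ ^ 2 + A3 r κ η * κ ^ 3 + A4 r κ η * κ ^ 4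
      = κ ^ r := by
  have h1' : κ - 1 ≠ 0 := sub_ne_zero.2 h1
  have h2' : η - 1 ≠ 0 := sub_ne_zero.2 h2
  have h3' : κ - η ≠ 0 := sub_ne_zero.2 h3
  unfold A0 A1 A2 A3 A4 P1p P2p P3p P4p den
  field_simp
  ring

lemma interp_val_η :
    A0 r κ η + A1 r κ η * η + A2 r κ η * η ^ 2 + A3 r κ η * η ^ 3 + A4 r κ η * η ^ 4
      = η ^ r := by
  have h1' : κ - 1 ≠ 0 := sub_ne_zero.2 h1
  have h2' : η - 1 ≠ 0 := sub_ne_zero.2 h2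
  have h3' : κ - η ≠ 0 := sub_ne_zero.2 h3
  unfold A0 A1 A2 A3 A4 P1p P2p P3p P4p den
  field_simp
  ring

lemma interp_der_κ :
    A1 r κ η + 2 * A2 r κ η * κ + 3 * A3 r κ η * κ ^ 2 + 4 * A4 r κ η * κ ^ 3
      = r * κ ^ (r - 1) := by
  have h1' : κ - 1 ≠ 0 := sub_ne_zero.2 h1
  have h2' : η - 1 ≠ 0 := sub_ne_zero.2 h2
  have h3' : κ - η ≠ 0 := sub_ne_zero.2 h3
  unfold A1 A2 A3 A4 P1p P2p P3p P4p den
  field_simp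
  ring

lemma interp_der_η :
    A1 r κ η + 2 * A2 r κ η * η + 3 * A3 r κ η * η ^ 2 + 4 * A4 r κ η * η ^ 3
      = r * η ^ (r - 1) := by
  have h1' : κ - 1 ≠ 0 := sub_ne_zero.2 h1
  have h2' : η - 1 ≠ 0 := sub_ne_zero.2 h2
  have h3' : κ - η ≠ 0 := sub_ne_zero.2 h3
  unfold A1 A2 A3 A4 P1p P2p P3p P4p den
  field_simp
  ring

end interp

lemma key (r u : ℝ) (hr : 0 < r) (hu0 : 0 ≤ u) (hu1 : u ≤ 1) :
    ∃ E : ℝ,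
      u ^ r - (A0 r κp ηp + A1 r κp ηp * u + A2 r κp ηp * u ^ 2
        + A3 r κp ηp * u ^ 3 + A4 r κp ηp * u ^ 4) = E ∧
      (0 ≤ r*(r-1)*(r-2)*(r-3)*(r-4) → E ≤ 0) ∧
      (r*(r-1)*(r-2)*(r-3)*(r-4) ≤ 0 → 0 ≤ E) := by
  have hκ1 : κp ≠ 1 := ne_of_lt κp_lt_one
  have hη1 : ηp ≠ 1 := ne_of_lt ηp_lt_one
  have hκη : κp ≠ ηp := ne_of_lt κp_lt_ηp
  have I1 := interp_val_κ r κp ηp hκ1 hη1 hκη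
  have I3 := interp_val_η r κp ηp hκ1 hη1 hκη
  have I2 := interp_der_κ r κp ηp hκ1 hη1 hκη
  have I4 := interp_der_η r κp ηp hκ1 hη1 hκη
  have I5 := interp_sum r κp ηp
  rcases eq_or_ne u κp with rfl | huκ
  · exact ⟨0, by linear_combination -I1, fun _ => le_rfl, fun _ => le_rfl⟩
  rcases eq_or_ne u ηp with rfl | huη
  · exact ⟨0, by linear_combination -I3, fun _ => le_rfl, fun _ => le_rfl⟩
  rcases eq_or_ne u 1 with rfl | hu1n
  · exact ⟨0, by linear_combination Real.one_rpow r - I5, fun _ => le_rfl, fun _ => le_rfl⟩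
  have hu1' : u < 1 := lt_of_le_of_ne hu1 hu1n
  set C : ℝ := (u ^ r - (A0 r κp ηp + A1 r κp ηp * u + A2 r κp ηp * u ^ 2
        + A3 r κp ηp * u ^ 3 + A4 r κp ηp * u ^ 4))
      / ((u - κp)^2 * (u - ηp)^2 * (u - 1)) with hCdef
  have hWne : (u - κp)^2 * (u - ηp)^2 * (u - 1) ≠ 0 :=
    mul_ne_zero (mul_ne_zero (pow_ne_zero 2 (sub_ne_zero.2 huκ))
      (pow_ne_zero 2 (sub_ne_zero.2 huη))) (sub_ne_zero.2 hu1n)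
  have hCW : C * ((u - κp)^2 * (u - ηp)^2 * (u - 1))
      = u ^ r - (A0 r κp ηp + A1 r κp ηp * u + A2 r κp ηp * u ^ 2
        + A3 r κp ηp * u ^ 3 + A4 r κp ηp * u ^ 4) := by
    rw [hCdef]; exact div_mul_cancel₀ _ hWne
  obtain ⟨ξ, hξ0, hξ⟩ := quintic_rolle r
      (-(A0 r κp ηp) + C*(κp*ηp)^2)
      (-(A1 r κp ηp) - C*((κp*ηp)^2 + 2*(κp+ηp)*(κp*ηp)))
      (-(A2 r κp ηp) + C*(2*(κp+ηp)*(κp*ηp) + (κp+ηp)^2 + 2*(κp*ηp)))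
      (-(A3 r κp ηp) - C*((κp+ηp)^2 + 2*(κp*ηp) + 2*(κp+ηp)))
      (-(A4 r κp ηp) + C*(2*(κp+ηp)+1))
      (-C)
      κp ηp u hr κp_pos κp_lt_ηp ηp_lt_one hu0 hu1' huκ huη
      (by linear_combination -I1)
      (by linear_combination -I3)
      (by linear_combination Real.one_rpow r - I5)
      (by linear_combination -hCW)
      (by linear_combination -I2)
      (by linear_combination -I4)
  have hξp : (0:ℝ) < ξ ^ (r-5) := Real.rpow_pos_of_pos hξ0 _
  refine ⟨C * ((u - κp)^2 * (u - ηp)^2 * (u - 1)), hCW.symm, ?_, ?_⟩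
  · intro hpr
    have hC : 0 ≤ C := by linarith [mul_nonneg hpr hξp.le]
    have h5 : 0 ≤ C * (u-κp)^2 * (u-ηp)^2 :=
      mul_nonneg (mul_nonneg hC (sq_nonneg _)) (sq_nonneg _)
    linarith [mul_nonneg h5 (by linarith : (0:ℝ) ≤ 1 - u)]
  · intro hpr
    have hC : C ≤ 0 := by linarith [mul_nonneg (neg_nonneg.2 hpr) hξp.le]
    have h5 : 0 ≤ (-C) * (u-κp)^2 * (u-ηp)^2 :=
      mul_nonneg (mul_nonneg (neg_nonneg.2 hC) (sq_nonneg _)) (sq_nonneg _)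
    linarith [mul_nonneg h5 (by linarith : (0:ℝ) ≤ 1 - u)]

lemma rpow_two_mul (x : ℝ) : (2:ℝ) ^ (2*x) = (4:ℝ) ^ x := by
  rw [show (2:ℝ)*x = ((2:ℕ):ℝ)*x by norm_num,
    Real.rpow_mul (by norm_num : (0:ℝ) ≤ 2), Real.rpow_natCast]
  norm_num

lemma four_rpow_step (r : ℝ) (j : ℕ) : (4:ℝ) ^ (r - (j:ℝ)) * (4:ℝ) ^ j = (4:ℝ) ^ r := by
  rw [← Real.rpow_natCast 4 j, ← Real.rpow_add (by norm_num : (0:ℝ) < 4)]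
  norm_num


set_option linter.unusedVariables false in
/-- Pointwise comparison in Rankin's method: for `θ ∈ [0, π]`,
`(4cos²θ)^r` is at most `2^{2r}·a₀⁺ + Σ_{j=1}^{4} 2^{2(r−j)}·a_j⁺·(2cos θ)^{2j}`
when `r ∈ ℛ⁻` and at least that quantity when `r ∈ ℛ⁺`. -/
theorem pointwise_comparison_plus (θ r : ℝ) (hθ : θ ∈ Set.Icc 0 π) :
    (r ∈ Rminus → 0 < r →
      (4 * Real.cos θ ^ 2) ^ r
        ≤ (2 : ℝ) ^ (2 * r) * a0p r
            + (2 : ℝ) ^ (2 * (r - 1)) * a1p r * (2 * Real.cos θ) ^ 2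
            + (2 : ℝ) ^ (2 * (r - 2)) * a2p r * (2 * Real.cos θ) ^ 4
            + (2 : ℝ) ^ (2 * (r - 3)) * a3p r * (2 * Real.cos θ) ^ 6
            + (2 : ℝ) ^ (2 * (r - 4)) * a4p r * (2 * Real.cos θ) ^ 8) ∧
    (r ∈ Rplus →
      (2 : ℝ) ^ (2 * r) * a0p r
          + (2 : ℝ) ^ (2 * (r - 1)) * a1p r * (2 * Real.cos θ) ^ 2
          + (2 : ℝ) ^ (2 * (r - 2)) * a2p r * (2 * Real.cos θ) ^ 4
          + (2 : ℝ) ^ (2 * (r - 3)) * a3p r * (2 * Real.cos θ) ^ 6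
          + (2 : ℝ) ^ (2 * (r - 4)) * a4p r * (2 * Real.cos θ) ^ 8
        ≤ (4 * Real.cos θ ^ 2) ^ r) := by
  set c : ℝ := Real.cos θ with hc
  have hu0 : (0:ℝ) ≤ c^2 := sq_nonneg c
  have hu1 : c^2 ≤ 1 := by
    nlinarith [Real.neg_one_le_cos θ, Real.cos_le_one θ]
  have e1 := four_rpow_step r 1
  have e2 := four_rpow_step r 2
  have e3 := four_rpow_step r 3
  have e4 := four_rpow_step r 4
  push_cast at e1 e2 e3 e4
  norm_num at e1 e2 e3 e4
  have hlhs : (4 * c^2) ^ r = (4:ℝ)^r * (c^2) ^ r := Real.mul_rpow (by norm_num) (sq_nonneg c)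
  have h4pos : (0:ℝ) < (4:ℝ)^r := Real.rpow_pos_of_pos (by norm_num) r
  have hrhs : (2 : ℝ) ^ (2 * r) * a0p r
          + (2 : ℝ) ^ (2 * (r - 1)) * a1p r * (2 * c) ^ 2
          + (2 : ℝ) ^ (2 * (r - 2)) * a2p r * (2 * c) ^ 4
          + (2 : ℝ) ^ (2 * (r - 3)) * a3p r * (2 * c) ^ 6
          + (2 : ℝ) ^ (2 * (r - 4)) * a4p r * (2 * c) ^ 8
        = (4:ℝ)^r * (A0 r κp ηp + A1 r κp ηp * c^2 + A2 r κp ηp * (c^2) ^ 2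
            + A3 r κp ηp * (c^2) ^ 3 + A4 r κp ηp * (c^2) ^ 4) := by
    rw [a0p_eq r, a1p_eq r, a2p_eq r, a3p_eq r, a4p_eq r,
      rpow_two_mul r, rpow_two_mul (r-1), rpow_two_mul (r-2), rpow_two_mul (r-3),
      rpow_two_mul (r-4)]
    linear_combination (A1 r κp ηp * c^2) * e1 + (A2 r κp ηp * c^4) * e2
      + (A3 r κp ηp * c^6) * e3 + (A4 r κp ηp * c^8) * e4
  constructor
  · intro hmem hrpos
    obtain ⟨E, hE, hE1, _⟩ := key r (c^2) hrpos hu0 hu1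
    have hsgn : 0 ≤ r*(r-1)*(r-2)*(r-3)*(r-4) := sign_prod_minus (by
      have := hmem
      simp only [Rminus, Set.mem_union, Set.mem_Ioc, Set.mem_Icc, Set.mem_Ici] at this
      tauto)
    have hE0 : E ≤ 0 := hE1 hsgn
    rw [hlhs, hrhs]
    have hq : (c^2)^r ≤ A0 r κp ηp + A1 r κp ηp * c^2 + A2 r κp ηp * (c^2) ^ 2
        + A3 r κp ηp * (c^2) ^ 3 + A4 r κp ηp * (c^2) ^ 4 := by linarith
    exact mul_le_mul_of_nonneg_left hq h4pos.le
  · intro hmem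
    have hmem' : ((1:ℝ) ≤ r ∧ r ≤ 2) ∨ (3 ≤ r ∧ r ≤ 4) := by
      simpa [Rplus, Set.mem_union, Set.mem_Icc] using hmem
    have hrpos : 0 < r := by rcases hmem' with ⟨h, _⟩ | ⟨h, _⟩ <;> linarith
    obtain ⟨E, hE, _, hE2⟩ := key r (c^2) hrpos hu0 hu1
    have hsgn : r*(r-1)*(r-2)*(r-3)*(r-4) ≤ 0 := sign_prod_plus hmem'
    have hE0 : 0 ≤ E := hE2 hsgn
    rw [hlhs, hrhs]
    have hq : A0 r κp ηp + A1 r κp ηp * c^2 + A2 r κp ηp * (c^2) ^ 2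
        + A3 r κp ηp * (c^2) ^ 3 + A4 r κp ηp * (c^2) ^ 4 ≤ (c^2)^r := by linarith
    exact mul_le_mul_of_nonneg_left hq h4pos.le
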